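/- Fix x in (l,r) and define s(y) = ∫_c^y s'(u) du, M(y) = ∫_c^y m(u) du, and analogously ŝ(y) = ∫_c^y ŝ'(u) du, M̂(y) = ∫_c^y m̂(u) du. Define the (possibly infinite) boundary quantities N(l) = ∫_{(l,x]} (s(x)-s(y)) m(y) dy and Σ(l) = ∫_{(l,x]} (M(x)-M(y)) s'(y) dy, and N̂(l), Σ̂(l) by the same formulas with ŝ, m̂ in place of s, m. Then N̂(l) = Σ(l) and Σ̂(l) = N(l). Consequently, in Feller's boundary classification: l is an entrance boundary for (a,b) (i.e. N(l) < ∞ and Σ(l) = ∞) if and only if l is an exit boundary for (a, a'-b) (i.e. N̂(l) = ∞ and Σ̂(l) < ∞); l is natural for (a,b) (both quantities infinite) if and only if it is natural for (a, a'-b); and l is regular for (a,b) (both quantities finite) if and only if it is regular for (a, a'-b). -/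

import Mathlib

open MeasureTheory
open scoped ENNReal

/-- Feller boundary quantities at `l` satisfy `N̂(l) = Σ(l)` and `Σ̂(l) = N(l)`; consequently,
`l` is entrance for `(a,b)` iff it is exit for the conjugate `(a, a'-b)`, natural iff natural,
and regular iff regular. -/
theorem conjugate_boundary_classification
    (l r : EReal) (hlr : l < r)
    (I : Set ℝ) (hI : I = {x : ℝ | l < (x : EReal) ∧ (x : EReal) < r})
    (a a' b : ℝ → ℝ) (c : ℝ) (hc : c ∈ I)
    (ha : ∀ x ∈ I, HasDerivAt a (a' x) x)
    (ha' : ContinuousOn a' I)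
    (hb : ContinuousOn b I)
    (hapos : ∀ x ∈ I, 0 < a x)
    (s' m shat' mhat : ℝ → ℝ)
    (hs' : ∀ x : ℝ, s' x = Real.exp (-(∫ y in c..x, b y / a y)))
    (hm : ∀ x : ℝ, m x = 1 / (s' x * a x))
    (hshat' : ∀ x : ℝ, shat' x = Real.exp (-(∫ y in c..x, (a' y - b y) / a y)))
    (hmhat : ∀ x : ℝ, mhat x = 1 / (shat' x * a x))
    (S M Shat Mhat : ℝ → ℝ)
    (hS : ∀ y : ℝ, S y = ∫ u in c..y, s' u)
    (hM : ∀ y : ℝ, M y = ∫ u in c..y, m u)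
    (hShat : ∀ y : ℝ, Shat y = ∫ u in c..y, shat' u)
    (hMhat : ∀ y : ℝ, Mhat y = ∫ u in c..y, mhat u)
    (x : ℝ) (hx : x ∈ I)
    (N Sig Nhat Sighat : ℝ≥0∞)
    (hN : N = ∫⁻ y in {y : ℝ | l < (y : EReal) ∧ y ≤ x},
        ENNReal.ofReal ((S x - S y) * m y))
    (hSig : Sig = ∫⁻ y in {y : ℝ | l < (y : EReal) ∧ y ≤ x},
        ENNReal.ofReal ((M x - M y) * s' y))
    (hNhat : Nhat = ∫⁻ y in {y : ℝ | l < (y : EReal) ∧ y ≤ x},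
        ENNReal.ofReal ((Shat x - Shat y) * mhat y))
    (hSighat : Sighat = ∫⁻ y in {y : ℝ | l < (y : EReal) ∧ y ≤ x},
        ENNReal.ofReal ((Mhat x - Mhat y) * shat' y)) :
    Nhat = Sig ∧ Sighat = N ∧
    ((N < ⊤ ∧ Sig = ⊤) ↔ (Nhat = ⊤ ∧ Sighat < ⊤)) ∧
    ((N = ⊤ ∧ Sig = ⊤) ↔ (Nhat = ⊤ ∧ Sighat = ⊤)) ∧
    ((N < ⊤ ∧ Sig < ⊤) ↔ (Nhat < ⊤ ∧ Sighat < ⊤)) := by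
  -- uIcc c y ⊆ I for y ∈ I
  have hIsub : ∀ y ∈ I, Set.uIcc c y ⊆ I := by
    intro y hy t ht
    rw [hI] at hc hy ⊢
    have h1 : l < ((min c y : ℝ) : EReal) := by
      rcases le_total c y with h | h
      · simpa [min_eq_left h] using hc.1
      · simpa [min_eq_right h] using hy.1
    have h2 : ((max c y : ℝ) : EReal) < r := by
      rcases le_total c y with h | h
      · simpa [max_eq_right h] using hy.2
      · simpa [max_eq_left h] using hc.2
    exact ⟨lt_of_lt_of_le h1 (EReal.coe_le_coe_iff.mpr ht.1),
           lt_of_le_of_lt (EReal.coe_le_coe_iff.mpr ht.2) h2⟩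
  have haC : ContinuousOn a I := fun t ht => (ha t ht).continuousAt.continuousWithinAt
  have hane : ∀ t ∈ I, a t ≠ 0 := fun t ht => ne_of_gt (hapos t ht)
  -- the log integral
  have hlog : ∀ y ∈ I, (∫ t in c..y, a' t / a t) = Real.log (a y) - Real.log (a c) := by
    intro y hy
    have hsub := hIsub y hy
    refine intervalIntegral.integral_eq_sub_of_hasDerivAt (f := fun t => Real.log (a t))
      (fun t ht => (ha t (hsub ht)).log (hane t (hsub ht))) ?_
    exact ((ha'.mono hsub).div (haC.mono hsub)
      (fun t ht => hane t (hsub ht))).intervalIntegrable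
  have hsplit : ∀ y ∈ I, (∫ t in c..y, (a' t - b t) / a t)
      = (∫ t in c..y, a' t / a t) - ∫ t in c..y, b t / a t := by
    intro y hy
    have hsub := hIsub y hy
    have h1 : IntervalIntegrable (fun t => a' t / a t) volume c y :=
      ((ha'.mono hsub).div (haC.mono hsub) (fun t ht => hane t (hsub ht))).intervalIntegrable
    have h2 : IntervalIntegrable (fun t => b t / a t) volume c y :=
      ((hb.mono hsub).div (haC.mono hsub) (fun t ht => hane t (hsub ht))).intervalIntegrable
    rw [← intervalIntegral.integral_sub h1 h2]
    apply intervalIntegral.integral_congr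
    intro t _
    ring
  have hacpos := hapos c hc
  have hacne : a c ≠ 0 := ne_of_gt hacpos
  -- shat' = a c * m on I
  have hshat_eq : ∀ y ∈ I, shat' y = a c * m y := by
    intro y hy
    have hay := hapos y hy
    rw [hshat', hsplit y hy, hlog y hy, hm, hs']
    rw [show -((Real.log (a y) - Real.log (a c)) - ∫ t in c..y, b t / a t)
        = ((∫ t in c..y, b t / a t) + Real.log (a c)) - Real.log (a y) by ring,
      Real.exp_sub, Real.exp_add, Real.exp_log hacpos, Real.exp_log hay, Real.exp_neg]
    have h := Real.exp_ne_zero (∫ t in c..y, b t / a t)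
    field_simp
  -- mhat = (a c)⁻¹ * s' on I
  have hmhat_eq : ∀ y ∈ I, mhat y = (a c)⁻¹ * s' y := by
    intro y hy
    have hay := hapos y hy
    have hs'ne : s' y ≠ 0 := by rw [hs']; exact Real.exp_ne_zero _
    rw [hmhat, hshat_eq y hy, hm]
    field_simp
  -- Shat = a c * M on I
  have hShat_eq : ∀ y ∈ I, Shat y = a c * M y := by
    intro y hy
    rw [hShat, hM, ← intervalIntegral.integral_const_mul]
    exact intervalIntegral.integral_congr fun t ht => hshat_eq t (hIsub y hy ht)
  -- Mhat = (a c)⁻¹ * S on I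
  have hMhat_eq : ∀ y ∈ I, Mhat y = (a c)⁻¹ * S y := by
    intro y hy
    rw [hMhat, hS, ← intervalIntegral.integral_const_mul]
    exact intervalIntegral.integral_congr fun t ht => hmhat_eq t (hIsub y hy ht)
  -- measurability of the integration set
  have hA : MeasurableSet {y : ℝ | l < (y : EReal) ∧ y ≤ x} := by
    have h1 : MeasurableSet {y : ℝ | l < (y : EReal)} :=
      measurable_coe_real_ereal measurableSet_Ioi
    have : {y : ℝ | l < (y : EReal) ∧ y ≤ x}
        = {y : ℝ | l < (y : EReal)} ∩ Set.Iic x := rfl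
    rw [this]
    exact h1.inter measurableSet_Iic
  -- points of the set lie in I
  have hmemI : ∀ y ∈ {y : ℝ | l < (y : EReal) ∧ y ≤ x}, y ∈ I := by
    intro y hy
    rw [hI] at hx ⊢
    exact ⟨hy.1, lt_of_le_of_lt (EReal.coe_le_coe_iff.mpr hy.2) hx.2⟩
  have hxI := hx
  -- the two swap identities
  have hNhatSig : Nhat = Sig := by
    rw [hNhat, hSig]
    refine setLIntegral_congr_fun hA (fun y hy => ?_)
    have hyI := hmemI y hy
    rw [hShat_eq y hyI, hShat_eq x hxI, hmhat_eq y hyI]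
    congr 1
    field_simp
  have hSighatN : Sighat = N := by
    rw [hSighat, hN]
    refine setLIntegral_congr_fun hA (fun y hy => ?_)
    have hyI := hmemI y hy
    rw [hMhat_eq y hyI, hMhat_eq x hxI, hshat_eq y hyI]
    congr 1
    field_simp
  refine ⟨hNhatSig, hSighatN, ?_, ?_, ?_⟩ <;> rw [hNhatSig, hSighatN] <;> exact and_comm
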